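/- Any occurrence of the word w_{n+1} l_n = w_n l_n w_n l_n in ξ is immediately followed and immediately preceded by the same word of length 2^{n+1}, which is either w_n l_n w_n l_{n+1} or w_n l_{n+1} w_n l_n. -/

import Mathlib

inductive A : Type
  | a | b | c | d
deriving DecidableEq

def subst : A → List A
  | A.a => [A.a, A.c, A.a]
  | A.b => [A.d]
  | A.c => [A.b]
  | A.d => [A.c]

def substW (u : List A) : List A := u.flatMap subst

def wrd (n : ℕ) : List A := substW^[n - 1] [A.a]

def ltr (n : ℕ) : List A := substW^[n - 1] [A.c]

def seg (ξ : ℕ → A) (s m : ℕ) : List A := (List.range m).map fun i => ξ (s + 1 + i)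

def IsFixed (ξ : ℕ → A) : Prop :=
  ∀ N : ℕ, seg ξ 0 ((substW (seg ξ 0 N)).length) = substW (seg ξ 0 N)


def v2 (m : ℕ) : ℕ :=
  if h : m ≠ 0 ∧ m % 2 = 0 then v2 (m / 2) + 1 else 0
decreasing_by omega

lemma v2_odd {m : ℕ} (h : m % 2 = 1) : v2 m = 0 := by
  rw [v2]; simp [h]

lemma v2_two_mul {m : ℕ} (h : m ≠ 0) : v2 (2 * m) = v2 m + 1 := by
  rw [v2, dif_pos (by omega : 2 * m ≠ 0 ∧ 2 * m % 2 = 0)]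
  have h2 : 2 * m / 2 = m := by omega
  rw [h2]

lemma v2_pow_mul (k : ℕ) {x : ℕ} (h : x ≠ 0) : v2 (2 ^ k * x) = k + v2 x := by
  induction k with
  | zero => simp
  | succ j ih =>
    have he : 2 ^ (j + 1) * x = 2 * (2 ^ j * x) := by ring
    rw [he, v2_two_mul (by positivity), ih]; omega

lemma v2_one : v2 1 = 0 := v2_odd rfl

lemma v2_pow (k : ℕ) : v2 (2 ^ k) = k := by
  have := v2_pow_mul k (x := 1) one_ne_zero
  simpa [v2_one] using this

lemma v2_spec (m : ℕ) (h : m ≠ 0) : ∃ o, o % 2 = 1 ∧ m = 2 ^ (v2 m) * o := by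
  induction m using Nat.strong_induction_on with
  | _ m ih =>
    rcases Nat.mod_two_eq_zero_or_one m with he | ho
    · have hm2 : m / 2 ≠ 0 := by omega
      obtain ⟨o, ho, heq⟩ := ih (m / 2) (by omega) hm2
      refine ⟨o, ho, ?_⟩
      have hv : v2 m = v2 (m / 2) + 1 := by
        conv_lhs => rw [(by omega : m = 2 * (m / 2))]
        rw [v2_two_mul hm2]
      rw [hv, pow_succ]
      calc m = 2 * (m / 2) := by omega
        _ = 2 * (2 ^ (v2 (m / 2)) * o) := by rw [← heq]
        _ = 2 ^ (v2 (m / 2)) * 2 * o := by ring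
    · exact ⟨m, ho, by rw [v2_odd ho]; ring⟩

lemma v2_dvd (m : ℕ) : 2 ^ (v2 m) ∣ m := by
  rcases eq_or_ne m 0 with rfl | h
  · simp
  · obtain ⟨o, _, heq⟩ := v2_spec m h
    exact ⟨o, heq⟩

lemma v2_lt_of_lt_pow {m e : ℕ} (h1 : 1 ≤ m) (h2 : m < 2 ^ e) : v2 m < e := by
  by_contra hc
  push_neg at hc
  have h3 := Nat.le_of_dvd (by omega) (v2_dvd m)
  have h4 := Nat.pow_le_pow_right (by norm_num : 1 ≤ 2) hc
  omega

lemma v2_add {e a m : ℕ} (ha : 2 ^ e ∣ a) (hm : m ≠ 0) (h : v2 m < e) :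
    v2 (a + m) = v2 m := by
  obtain ⟨c, rfl⟩ := ha
  obtain ⟨o, ho, heq⟩ := v2_spec m hm
  have key : 2 ^ e * c + m = 2 ^ (v2 m) * (2 ^ (e - v2 m) * c + o) := by
    conv_lhs => rw [heq]
    rw [mul_add]
    congr 1
    rw [← mul_assoc, ← pow_add]
    congr 2
    omega
  have hodd : (2 ^ (e - v2 m) * c + o) % 2 = 1 := by
    obtain ⟨j, hj⟩ : (2:ℕ) ∣ 2 ^ (e - v2 m) := dvd_pow_self 2 (by omega)
    rw [hj]
    have he2 : 2 * j * c + o = 2 * (j * c) + o := by ring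
    rw [he2]; omega
  rw [key, v2_pow_mul _ (by omega), v2_odd hodd]
  omega

def tc (k : ℕ) : A :=
  match k % 3 with
  | 0 => A.c
  | 1 => A.b
  | _ => A.d

def ff (q : ℕ) : A := if q % 2 = 1 then A.a else tc (v2 (q / 2))

lemma tc_congr {x y : ℕ} (h : x % 3 = y % 3) : tc x = tc y := by
  unfold tc; rw [h]

lemma tc_inj {x y : ℕ} (h : tc x = tc y) : x % 3 = y % 3 := by
  unfold tc at h
  rcases (by omega : x % 3 = 0 ∨ x % 3 = 1 ∨ x % 3 = 2) with hx | hx | hx <;>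
    rcases (by omega : y % 3 = 0 ∨ y % 3 = 1 ∨ y % 3 = 2) with hy | hy | hy <;>
      simp [hx, hy] at h ⊢

lemma tc_ne_a (x : ℕ) : tc x ≠ A.a := by
  unfold tc
  rcases (by omega : x % 3 = 0 ∨ x % 3 = 1 ∨ x % 3 = 2) with hx | hx | hx <;> simp [hx]

lemma substW_append (u v : List A) : substW (u ++ v) = substW u ++ substW v :=
  List.flatMap_append

lemma substW_tc (n : ℕ) : substW [tc n] = [tc (n + 1)] := by
  rcases (by omega : n % 3 = 0 ∨ n % 3 = 1 ∨ n % 3 = 2) with hx | hx | hx <;>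
    · have h1 : (n + 1) % 3 = (n % 3 + 1) % 3 := by omega
      simp [tc, hx, h1, substW, subst]

lemma ltr_eq (n : ℕ) : ltr (n + 1) = [tc n] := by
  induction n with
  | zero => rfl
  | succ j ih =>
    have : ltr (j + 2) = substW (ltr (j + 1)) := by
      unfold ltr
      simp [Function.iterate_succ_apply']
    rw [this, ih, substW_tc]

lemma wrd_substW (n : ℕ) : wrd (n + 2) = substW (wrd (n + 1)) := by
  unfold wrd
  simp [Function.iterate_succ_apply']

lemma wrd_succ (n : ℕ) : wrd (n + 2) = wrd (n + 1) ++ [tc n] ++ wrd (n + 1) := by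
  induction n with
  | zero => rfl
  | succ j ih =>
    calc wrd (j + 3) = substW (wrd (j + 2)) := wrd_substW (j + 1)
      _ = substW (wrd (j + 1) ++ [tc j] ++ wrd (j + 1)) := by rw [ih]
      _ = substW (wrd (j + 1)) ++ [tc (j + 1)] ++ substW (wrd (j + 1)) := by
          rw [substW_append, substW_append, substW_tc]
      _ = wrd (j + 2) ++ [tc (j + 1)] ++ wrd (j + 2) := by rw [← wrd_substW]

lemma wrd_length (n : ℕ) : (wrd (n + 1)).length = 2 ^ (n + 1) - 1 := by
  induction n with
  | zero => rfl
  | succ j ih =>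
    rw [wrd_succ]
    simp only [List.length_append, ih, List.length_singleton]
    have : 1 ≤ 2 ^ (j + 1) := Nat.one_le_two_pow
    rw [pow_succ]
    omega

lemma wrd_getD (n : ℕ) : ∀ i, i < 2 ^ (n + 1) - 1 → (wrd (n + 1)).getD i A.a = ff (i + 1) := by
  induction n with
  | zero =>
    intro i hi
    interval_cases i
    rfl
  | succ j ih =>
    intro i hi
    have h1 : 1 ≤ 2 ^ (j + 1) := Nat.one_le_two_pow
    have hpow : 2 ^ (j + 2) = 2 * 2 ^ (j + 1) := by rw [pow_succ]; ring
    rw [wrd_succ]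
    rcases (by omega : i < 2 ^ (j + 1) - 1 ∨ i = 2 ^ (j + 1) - 1 ∨ 2 ^ (j + 1) ≤ i) with hc | hc | hc
    · rw [List.append_assoc, List.getD_append _ _ _ _ (by rw [wrd_length]; omega)]
      exact ih i hc
    · rw [List.append_assoc, List.getD_append_right _ _ _ _ (by rw [wrd_length]; omega)]
      rw [wrd_length, hc]
      have : 2 ^ (j + 1) - 1 - (2 ^ (j + 1) - 1) = 0 := by omega
      rw [this]
      show tc j = ff (2 ^ (j + 1) - 1 + 1)
      have he : 2 ^ (j + 1) - 1 + 1 = 2 ^ (j + 1) := by omega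
      rw [he]
      unfold ff
      have : 2 ^ (j + 1) % 2 = 0 := by
        rw [pow_succ]; omega
      rw [if_neg (by omega)]
      have : 2 ^ (j + 1) / 2 = 2 ^ j := by rw [pow_succ]; omega
      rw [this, v2_pow]
    · rw [List.append_assoc, List.getD_append_right _ _ _ _ (by rw [wrd_length]; omega)]
      rw [wrd_length]
      set k := i - (2 ^ (j + 1) - 1) with hk
      have hk1 : 1 ≤ k := by omega
      have hk2 : k - 1 < 2 ^ (j + 1) - 1 := by omega
      rw [List.getD_append_right _ _ _ _ (by simp only [List.length_singleton]; exact hk1)]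
      simp only [List.length_singleton]
      have : k - 1 = i - (2 ^ (j + 1) - 1) - 1 := by omega
      rw [← this]
      rw [ih (k - 1) hk2]
      -- ff (k - 1 + 1) = ff (i + 1), i + 1 = 2^(j+1) + k
      have hik : i + 1 = 2 ^ (j + 1) + k := by omega
      have hkk : k - 1 + 1 = k := by omega
      rw [hkk, hik]
      unfold ff
      have hpar : (2 ^ (j + 1) + k) % 2 = k % 2 := by
        have : 2 ^ (j + 1) % 2 = 0 := by rw [pow_succ]; omega
        omega
      rcases Nat.mod_two_eq_zero_or_one k with hke | hko
      · rw [if_neg (by omega), if_neg (by omega)]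
        congr 1
        have hdiv : (2 ^ (j + 1) + k) / 2 = 2 ^ j + k / 2 := by
          rw [pow_succ]; omega
        rw [hdiv]
        have hk21 : 1 ≤ k / 2 := by omega
        have hk22 : k / 2 < 2 ^ j := by
          have h5 := hk2
          rw [pow_succ] at h5
          omega
        exact (v2_add (dvd_refl _) (by omega) (v2_lt_of_lt_pow hk21 hk22)).symm
      · rw [if_pos (by omega), if_pos (by omega)]

lemma seg_length (ξ : ℕ → A) (s m : ℕ) : (seg ξ s m).length = m := by simp [seg]

lemma seg_getD (ξ : ℕ → A) {s m i : ℕ} (h : i < m) :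
    (seg ξ s m).getD i A.a = ξ (s + 1 + i) := by
  rw [seg, List.getD_eq_getElem _ _ (by simpa using h)]
  simp

lemma seg_append (ξ : ℕ → A) (s m1 m2 : ℕ) :
    seg ξ s (m1 + m2) = seg ξ s m1 ++ seg ξ (s + m1) m2 := by
  unfold seg
  rw [List.range_add, List.map_append, List.map_map]
  congr 1
  apply List.map_congr_left
  intro x _
  simp only [Function.comp_apply]
  congr 1
  omega

section
variable {ξ : ℕ → A}

lemma xi_one (hξ : IsFixed ξ) : seg ξ 0 1 = [A.a] := by
  have hs : seg ξ 0 1 = [ξ 1] := by simp [seg, List.range_succ]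
  have h := hξ 1
  rw [hs] at h
  cases h1 : ξ 1 with
  | a => rw [hs, h1]
  | b =>
    rw [h1] at h
    simp only [substW, subst, List.flatMap_cons, List.flatMap_nil, List.append_nil,
      List.length_singleton] at h
    rw [hs, h1] at h
    simp at h
  | c =>
    rw [h1] at h
    simp only [substW, subst, List.flatMap_cons, List.flatMap_nil, List.append_nil,
      List.length_singleton] at h
    rw [hs, h1] at h
    simp at h
  | d =>
    rw [h1] at h
    simp only [substW, subst, List.flatMap_cons, List.flatMap_nil, List.append_nil,
      List.length_singleton] at h
    rw [hs, h1] at h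
    simp at h

lemma xi_prefix (hξ : IsFixed ξ) : ∀ n, seg ξ 0 (2 ^ (n + 1) - 1) = wrd (n + 1) := by
  intro n
  induction n with
  | zero => exact xi_one hξ
  | succ j ih =>
    have h := hξ (2 ^ (j + 1) - 1)
    rw [ih, ← wrd_substW j, wrd_length (j + 1)] at h
    exact h

lemma xi_eq (hξ : IsFixed ξ) : ∀ q, 1 ≤ q → ξ q = ff q := by
  intro q hq
  have hq2 : q < 2 ^ q := by
    clear hq
    induction q with
    | zero => simp
    | succ k ih => rw [pow_succ]; omega
  have hq1 : q - 1 + 1 = q := by omega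
  have hp := xi_prefix hξ (q - 1)
  rw [hq1] at hp
  have h1 : (seg ξ 0 (2 ^ q - 1)).getD (q - 1) A.a = ξ q := by
    rw [seg_getD ξ (by omega)]
    congr 1
    omega
  have h2 : (wrd q).getD (q - 1) A.a = ff q := by
    have := wrd_getD (q - 1) (q - 1) (by rw [hq1]; omega)
    rw [hq1] at this
    exact this
  rw [← h1, hp, h2]

lemma blk (hξ : IsFixed ξ) :
    ∀ n t, (∀ m, 1 ≤ m → m < 2 ^ n → v2 (t + m) % 3 = v2 m % 3) →
      seg ξ (2 * t) (2 ^ (n + 1)) = wrd (n + 1) ++ [tc (v2 (t + 2 ^ n))] := by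
  intro n
  induction n with
  | zero =>
    intro t _
    have e1 : ξ (2 * t + 1) = A.a := by
      rw [xi_eq hξ _ (by omega)]
      unfold ff
      rw [if_pos (by omega)]
    have e2 : ξ (2 * t + 2) = tc (v2 (t + 1)) := by
      rw [xi_eq hξ _ (by omega)]
      unfold ff
      rw [if_neg (by omega)]
      have hd : (2 * t + 2) / 2 = t + 1 := by omega
      rw [hd]
    have hr : List.range (2 ^ (0 + 1)) = [0, 1] := rfl
    simp only [seg, hr, List.map_cons, List.map_nil]
    rw [show 2 * t + 1 + 0 = 2 * t + 1 from by omega,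
        show 2 * t + 1 + 1 = 2 * t + 2 from by omega, e1, e2]
    rfl
  | succ j ih =>
    intro t hyp
    have hpw : (2:ℕ) ^ (j + 1) = 2 ^ j * 2 := pow_succ 2 j
    have hpw2 : (2:ℕ) ^ (j + 2) = 2 ^ (j + 1) * 2 := pow_succ 2 (j + 1)
    have h2j : 1 ≤ (2:ℕ) ^ j := Nat.one_le_two_pow
    have h1 := ih t (fun m hm1 hm2 => hyp m hm1 (by omega))
    have h2 := ih (t + 2 ^ j) (fun m hm1 hm2 => by
      have ha := hyp (2 ^ j + m) (by omega) (by omega)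
      have hb : v2 (2 ^ j + m) = v2 m :=
        v2_add (dvd_refl _) (by omega) (v2_lt_of_lt_pow hm1 hm2)
      calc v2 (t + 2 ^ j + m) % 3 = v2 (t + (2 ^ j + m)) % 3 := by rw [add_assoc]
        _ = v2 (2 ^ j + m) % 3 := ha
        _ = v2 m % 3 := by rw [hb])
    have hmid : tc (v2 (t + 2 ^ j)) = tc j := by
      apply tc_congr
      have h3 := hyp (2 ^ j) (by omega) (by omega)
      rw [v2_pow] at h3
      exact h3
    have hsplit : seg ξ (2 * t) (2 ^ (j + 2)) =
        seg ξ (2 * t) (2 ^ (j + 1)) ++ seg ξ (2 * t + 2 ^ (j + 1)) (2 ^ (j + 1)) := by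
      rw [show (2:ℕ) ^ (j + 2) = 2 ^ (j + 1) + 2 ^ (j + 1) from by omega]
      exact seg_append ξ (2 * t) _ _
    show seg ξ (2 * t) (2 ^ (j + 2)) = wrd (j + 2) ++ [tc (v2 (t + 2 ^ (j + 1)))]
    rw [hsplit, h1, hmid,
        show 2 * t + 2 ^ (j + 1) = 2 * (t + 2 ^ j) from by omega, h2,
        show t + 2 ^ j + 2 ^ j = t + 2 ^ (j + 1) from by omega,
        wrd_succ j]
    simp [List.append_assoc]

lemma v2_pos {m : ℕ} (h1 : m ≠ 0) (h2 : m % 2 = 0) : 1 ≤ v2 m := by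
  rw [v2, dif_pos ⟨h1, h2⟩]
  omega

theorem stmt11 (ξ : ℕ → A) (hξ : IsFixed ξ) :
    ∀ n : ℕ, 1 ≤ n → ∀ s : ℕ, seg ξ s (2 ^ (n + 1)) = wrd (n + 1) ++ ltr n →
      ∃ u : List A,
        (u = wrd n ++ ltr n ++ wrd n ++ ltr (n + 1) ∨
         u = wrd n ++ ltr (n + 1) ++ wrd n ++ ltr n) ∧
        seg ξ (s + 2 ^ (n + 1)) (2 ^ (n + 1)) = u ∧
        2 ^ (n + 1) ≤ s ∧ seg ξ (s - 2 ^ (n + 1)) (2 ^ (n + 1)) = u := by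
  intro n hn s hyp
  obtain ⟨p, rfl⟩ : ∃ p, n = p + 1 := ⟨n - 1, by omega⟩
  have hP1 : 1 ≤ (2:ℕ) ^ p := Nat.one_le_two_pow
  have hpw1 : (2:ℕ) ^ (p + 1) = 2 ^ p * 2 := pow_succ 2 p
  have hpw2 : (2:ℕ) ^ (p + 2) = 2 ^ (p + 1) * 2 := pow_succ 2 (p + 1)
  have hlen := wrd_length (p + 1)
  -- pointwise form of the hypothesis
  have hpt : ∀ i, i < 2 ^ (p + 2) → ξ (s + 1 + i) = (wrd (p + 2) ++ ltr (p + 1)).getD i A.a := by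
    intro i hi
    have h := congrArg (fun l => l.getD i A.a) hyp
    rw [seg_getD ξ (by exact hi)] at h
    exact h
  -- s is even
  have hs2 : s % 2 = 0 := by
    have h0 := hpt 0 (by positivity)
    rw [List.getD_append _ _ _ _ (by rw [wrd_length]; omega)] at h0
    rw [wrd_getD (p + 1) 0 (by rw [hpw2, hpw1] at *; omega)] at h0
    have hff : ff 1 = A.a := by unfold ff; rw [if_pos (by omega)]
    rw [hff] at h0
    by_contra hodd
    rw [xi_eq hξ _ (by omega)] at h0
    unfold ff at h0
    rw [if_neg (by omega)] at h0
    exact tc_ne_a _ h0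
  obtain ⟨t, rfl⟩ : ∃ t, s = 2 * t := ⟨s / 2, by omega⟩
  -- even-position extraction
  have hev : ∀ m, 1 ≤ m → m ≤ 2 ^ (p + 1) →
      v2 (t + m) % 3 = (if m = 2 ^ (p + 1) then p else v2 m) % 3 := by
    intro m h1 h2
    have h := hpt (2 * m - 1) (by omega)
    rw [show 2 * t + 1 + (2 * m - 1) = 2 * (t + m) from by omega] at h
    rw [xi_eq hξ _ (by omega)] at h
    unfold ff at h
    rw [if_neg (by omega), show 2 * (t + m) / 2 = t + m from by omega] at h
    by_cases hc : m = 2 ^ (p + 1)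
    · rw [if_pos hc]
      subst hc
      rw [List.getD_append_right _ _ _ _ (by rw [hlen]; omega)] at h
      rw [hlen, ltr_eq p, show 2 * 2 ^ (p + 1) - 1 - (2 ^ (p + 2) - 1) = 0 from by omega] at h
      exact tc_inj h
    · rw [if_neg hc]
      rw [List.getD_append _ _ _ _ (by rw [hlen]; omega)] at h
      rw [wrd_getD (p + 1) (2 * m - 1) (by omega)] at h
      rw [show 2 * m - 1 + 1 = 2 * m from by omega] at h
      conv at h => rw [ff]
      rw [if_neg (by omega), show 2 * m / 2 = m from by omega] at h
      exact tc_inj h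
  have ht0 : t ≠ 0 := by
    rintro rfl
    have h := hev (2 ^ (p + 1)) (by omega) le_rfl
    rw [if_pos rfl, zero_add, v2_pow] at h
    omega
  -- forcing 2^p ∣ t
  have hforce : ∀ j, j ≤ p → 2 ^ j ∣ t := by
    intro j
    induction j with
    | zero => intro _; simp
    | succ i ih2 =>
      intro hip
      obtain ⟨t1, rfl⟩ := ih2 (by omega)
      have ht1 : t1 ≠ 0 := by rintro rfl; simp at ht0
      have hii : (2:ℕ) ^ i < 2 ^ (p + 1) := Nat.pow_lt_pow_right (by norm_num) (by omega)
      have hii2 : (2:ℕ) ^ (i + 1) < 2 ^ (p + 1) := Nat.pow_lt_pow_right (by norm_num) (by omega)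
      suffices hsuf : t1 % 2 = 0 by
        obtain ⟨t2, ht2⟩ : ∃ t2, t1 = 2 * t2 := ⟨t1 / 2, by omega⟩
        exact ⟨t2, by rw [ht2, pow_succ]; ring⟩
      by_contra hodd1
      have hA := hev (2 ^ i) Nat.one_le_two_pow (by omega)
      rw [if_neg (by omega)] at hA
      rw [show 2 ^ i * t1 + 2 ^ i = 2 ^ i * (t1 + 1) from by ring,
          v2_pow_mul i (by omega), v2_pow] at hA
      have hv1 : v2 (t1 + 1) % 3 = 0 := by omega
      have hv1' : 1 ≤ v2 (t1 + 1) := v2_pos (by omega) (by omega)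
      have h8 : 8 ∣ t1 + 1 := by
        refine dvd_trans ?_ (v2_dvd (t1 + 1))
        rw [show (8:ℕ) = 2 ^ 3 from by norm_num]
        exact pow_dvd_pow 2 (by omega)
      have hB := hev (2 ^ (i + 1)) Nat.one_le_two_pow (by omega)
      rw [if_neg (by omega)] at hB
      rw [show 2 ^ i * t1 + 2 ^ (i + 1) = 2 ^ i * (t1 + 2) from by rw [pow_succ]; ring,
          v2_pow_mul i (by omega), v2_pow, v2_odd (by omega)] at hB
      omega
  obtain ⟨u, rfl⟩ := hforce p le_rfl
  have hu0 : u ≠ 0 := by rintro rfl; simp at ht0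
  have hC1 : v2 (u + 1) % 3 = 0 := by
    have h := hev (2 ^ p) (by omega) (by omega)
    rw [if_neg (by omega), show 2 ^ p * u + 2 ^ p = 2 ^ p * (u + 1) from by ring,
        v2_pow_mul p (by omega), v2_pow] at h
    omega
  have hC2 : v2 (u + 2) % 3 = 0 := by
    have h := hev (2 ^ (p + 1)) (by omega) le_rfl
    rw [if_pos rfl, show 2 ^ p * u + 2 ^ (p + 1) = 2 ^ p * (u + 2) from by rw [pow_succ]; ring,
        v2_pow_mul p (by omega)] at h
    omega
  have hu67 : u % 8 = 6 ∨ u % 8 = 7 := by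
    rcases Nat.mod_two_eq_zero_or_one u with hue | huo
    · left
      have h1 : 1 ≤ v2 (u + 2) := v2_pos (by omega) (by omega)
      have h8 : 8 ∣ u + 2 := by
        refine dvd_trans ?_ (v2_dvd (u + 2))
        rw [show (8:ℕ) = 2 ^ 3 from by norm_num]
        exact pow_dvd_pow 2 (by omega)
      omega
    · right
      have h1 : 1 ≤ v2 (u + 1) := v2_pos (by omega) (by omega)
      have h8 : 8 ∣ u + 1 := by
        refine dvd_trans ?_ (v2_dvd (u + 1))
        rw [show (8:ℕ) = 2 ^ 3 from by norm_num]
        exact pow_dvd_pow 2 (by omega)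
      omega
  have hu6 : 6 ≤ u := by omega
  -- full double-block builder
  have full : ∀ b : ℕ, 2 ^ p ∣ b →
      seg ξ (2 * b) (2 ^ (p + 2)) =
        wrd (p + 1) ++ [tc (v2 (b + 2 ^ p))] ++ (wrd (p + 1) ++ [tc (v2 (b + 2 * 2 ^ p))]) := by
    intro b hb
    have half : ∀ c : ℕ, 2 ^ p ∣ c →
        seg ξ (2 * c) (2 ^ (p + 1)) = wrd (p + 1) ++ [tc (v2 (c + 2 ^ p))] := by
      intro c hc
      apply blk hξ p c
      intro m hm1 hm2
      rw [v2_add hc (by omega) (v2_lt_of_lt_pow hm1 hm2)]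
    rw [show (2:ℕ) ^ (p + 2) = 2 ^ (p + 1) + 2 ^ (p + 1) from by omega, seg_append,
        half b hb, show 2 * b + 2 ^ (p + 1) = 2 * (b + 2 ^ p) from by omega,
        half (b + 2 ^ p) (dvd_add hb dvd_rfl),
        show b + 2 ^ p + 2 ^ p = b + 2 * 2 ^ p from by omega]
  -- the blocks we need
  have hpost : 2 * (2 ^ p * u) + 2 ^ (p + 2) = 2 * (2 ^ p * (u + 2)) := by
    rw [show 2 ^ p * (u + 2) = 2 ^ p * u + 2 ^ p * 2 from by ring]
    omega
  have hpre : 2 * (2 ^ p * u) - 2 ^ (p + 2) = 2 * (2 ^ p * (u - 2)) := by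
    rw [Nat.mul_sub, show 2 ^ p * u - 2 ^ p * 2 = ((2 ^ p * u) - 2 ^ p * 2) from rfl]
    have h1 : 2 ^ p * 2 ≤ 2 ^ p * u := Nat.mul_le_mul_left _ (by omega)
    omega
  have hsge : 2 ^ (p + 1 + 1) ≤ 2 * (2 ^ p * u) := by
    have h1 : 2 ^ p * 2 ≤ 2 ^ p * u := Nat.mul_le_mul_left _ (by omega)
    omega
  have hfull1 := full (2 ^ p * (u + 2)) ⟨u + 2, rfl⟩
  have hfull2 := full (2 ^ p * (u - 2)) ⟨u - 2, rfl⟩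
  have he1 : 2 ^ p * (u + 2) + 2 ^ p = 2 ^ p * (u + 3) := by ring
  have he2 : 2 ^ p * (u + 2) + 2 * 2 ^ p = 2 ^ p * (u + 4) := by ring
  have he3 : 2 ^ p * (u - 2) + 2 ^ p = 2 ^ p * (u - 1) := by
    rw [Nat.mul_sub, Nat.mul_sub]
    have h1 : 2 ^ p * 2 ≤ 2 ^ p * u := Nat.mul_le_mul_left _ (by omega)
    have h2 : 2 ^ p * 1 ≤ 2 ^ p * u := Nat.mul_le_mul_left _ (by omega)
    omega
  have he4 : 2 ^ p * (u - 2) + 2 * 2 ^ p = 2 ^ p * u := by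
    rw [Nat.mul_sub]
    have h1 : 2 ^ p * 2 ≤ 2 ^ p * u := Nat.mul_le_mul_left _ (by omega)
    omega
  rw [he1, he2] at hfull1
  rw [he3, he4] at hfull2
  rcases hu67 with h6 | h7
  · -- u ≡ 6 mod 8 : word is wrd n ++ ltr n ++ wrd n ++ ltr (n+1)
    have vu : v2 (2 ^ p * u) = p + 1 := by
      rw [show 2 ^ p * u = 2 ^ p * (2 * (u / 2)) from by rw [Nat.mul_div_cancel' ⟨u/2, by omega⟩]]
      rw [show 2 ^ p * (2 * (u / 2)) = 2 ^ (p + 1) * (u / 2) from by rw [pow_succ]; ring]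
      rw [v2_pow_mul (p + 1) (by omega), v2_odd (by omega)]
    have vu3 : v2 (2 ^ p * (u + 3)) = p := by
      rw [v2_pow_mul p (by omega), v2_odd (by omega)]
      omega
    have vu4 : v2 (2 ^ p * (u + 4)) = p + 1 := by
      rw [show 2 ^ p * (u + 4) = 2 ^ (p + 1) * ((u + 4) / 2) from by
            rw [pow_succ, show 2 ^ p * 2 * ((u + 4) / 2) = 2 ^ p * (2 * ((u + 4) / 2)) from by ring,
              Nat.mul_div_cancel' ⟨(u+4)/2, by omega⟩]]
      rw [v2_pow_mul (p + 1) (by omega), v2_odd (by omega)]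
    have vum1 : v2 (2 ^ p * (u - 1)) = p := by
      rw [v2_pow_mul p (by omega), v2_odd (by omega)]
      omega
    rw [vu3, vu4] at hfull1
    rw [vum1, vu] at hfull2
    refine ⟨wrd (p + 1) ++ ltr (p + 1) ++ wrd (p + 1) ++ ltr (p + 1 + 1), Or.inl rfl, ?_, hsge, ?_⟩
    · rw [show 2 * (2 ^ p * u) + 2 ^ (p + 1 + 1) = 2 * (2 ^ p * (u + 2)) from hpost, hfull1,
          ltr_eq p, ltr_eq (p + 1)]
      simp [List.append_assoc]
    · rw [show 2 * (2 ^ p * u) - 2 ^ (p + 1 + 1) = 2 * (2 ^ p * (u - 2)) from hpre, hfull2,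
          ltr_eq p, ltr_eq (p + 1)]
      simp [List.append_assoc]
  · -- u ≡ 7 mod 8 : word is wrd n ++ ltr (n+1) ++ wrd n ++ ltr n
    have vu : v2 (2 ^ p * u) = p := by
      rw [v2_pow_mul p (by omega), v2_odd (by omega)]
      omega
    have vu3 : v2 (2 ^ p * (u + 3)) = p + 1 := by
      rw [show 2 ^ p * (u + 3) = 2 ^ (p + 1) * ((u + 3) / 2) from by
            rw [pow_succ, show 2 ^ p * 2 * ((u + 3) / 2) = 2 ^ p * (2 * ((u + 3) / 2)) from by ring,
              Nat.mul_div_cancel' ⟨(u+3)/2, by omega⟩]]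
      rw [v2_pow_mul (p + 1) (by omega), v2_odd (by omega)]
    have vu4 : v2 (2 ^ p * (u + 4)) = p := by
      rw [v2_pow_mul p (by omega), v2_odd (by omega)]
      omega
    have vum1 : v2 (2 ^ p * (u - 1)) = p + 1 := by
      rw [show 2 ^ p * (u - 1) = 2 ^ (p + 1) * ((u - 1) / 2) from by
            rw [pow_succ, show 2 ^ p * 2 * ((u - 1) / 2) = 2 ^ p * (2 * ((u - 1) / 2)) from by ring,
              Nat.mul_div_cancel' ⟨(u-1)/2, by omega⟩]]
      rw [v2_pow_mul (p + 1) (by omega), v2_odd (by omega)]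
    rw [vu3, vu4] at hfull1
    rw [vum1, vu] at hfull2
    refine ⟨wrd (p + 1) ++ ltr (p + 1 + 1) ++ wrd (p + 1) ++ ltr (p + 1), Or.inr rfl, ?_, hsge, ?_⟩
    · rw [show 2 * (2 ^ p * u) + 2 ^ (p + 1 + 1) = 2 * (2 ^ p * (u + 2)) from hpost, hfull1,
          ltr_eq p, ltr_eq (p + 1)]
      simp [List.append_assoc]
    · rw [show 2 * (2 ^ p * u) - 2 ^ (p + 1 + 1) = 2 * (2 ^ p * (u - 2)) from hpre, hfull2,
          ltr_eq p, ltr_eq (p + 1)]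
      simp [List.append_assoc]
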